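/- arXiv:1310.1520 — 2 statements merged into one kernel-verified Lean document; each statement's English description precedes it below -/
import Mathlib

section
/- Let (α_i)_{i≥1} be a sequence in a commutative ring, let f(t) = Σ_{i≥1} α_i t^i as a formal power series, and for d ≥ 1 let γ_d = Σ_{k≥1} Σ_{𝒫} α_{a_1}·α_{a_2}⋯α_{a_k}, where the inner sum is over all cyclic compositions 𝒫 of d into k parts with part sizes a_1,…,a_k. Then Σ_{d≥1} γ_d t^d = t·f′(t)/(1 − f(t)) as formal power series (the inverse exists since f has zero constant term). -/
/-- A cyclic composition of `d` into `k` parts is a partition of the vertex set of the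
labeled cycle `ℤ/d` into blocks inducing paths; equivalently it is obtained by deleting
a nonempty set `S` of the `d` edges of the cycle (we identify the edge `{s, s+1}` with
its left endpoint `s`, so `S` is a `Finset (ZMod d)`).  The block that starts right
after the deleted edge `s` has size `cycGap d S s`, the least `m ≥ 1` with `s + m ∈ S`. -/
noncomputable def cycGap (d : ℕ) (S : Finset (ZMod d)) (s : ZMod d) : ℕ :=
  sInf {m : ℕ | 0 < m ∧ s + (m : ZMod d) ∈ S}

/-- `γ_{d,k} = Σ_𝒫 α_{a_1} ⋯ α_{a_k}`, summed over all cyclic compositions `𝒫` of `d`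
into `k` parts (encoded as `k`-element sets of deleted edges), where `a_1, …, a_k` are
the part sizes.  (For `d = 0` there is no cycle and the sum is empty.) -/
noncomputable def cycCompSum {R : Type*} [CommRing R] (α : ℕ → R) (d k : ℕ) : R :=
  if h : d = 0 then 0 else
    haveI : NeZero d := ⟨h⟩
    ∑ S ∈ (Finset.univ : Finset (ZMod d)).powersetCard k, ∏ s ∈ S, α (cycGap d S s)



lemma sInf_gap_eq {P : ℕ → Prop} {m : ℕ} (h1 : 0 < m) (h2 : P m)
    (h3 : ∀ m', 0 < m' → m' < m → ¬P m') : sInf {n | 0 < n ∧ P n} = m := by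
  have hmem : m ∈ {n : ℕ | 0 < n ∧ P n} := ⟨h1, h2⟩
  refine le_antisymm (Nat.sInf_le hmem) ?_
  by_contra h
  push_neg at h
  obtain ⟨h0, hP⟩ := Nat.sInf_mem (⟨m, hmem⟩ : {n : ℕ | 0 < n ∧ P n}.Nonempty)
  exact h3 _ h0 h hP

noncomputable def ngap (A : Finset ℕ) (a : ℕ) : ℕ := sInf {m | 0 < m ∧ a + m ∈ A}

lemma ngap_eq {A : Finset ℕ} {a m : ℕ} (h1 : 0 < m) (h2 : a + m ∈ A)
    (h3 : ∀ m', 0 < m' → m' < m → a + m' ∉ A) : ngap A a = m :=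
  sInf_gap_eq h1 h2 h3

noncomputable def fmax (A : Finset ℕ) : ℕ := sSup (A : Set ℕ)
noncomputable def fmin (A : Finset ℕ) : ℕ := sInf (A : Set ℕ)

lemma fmax_eq {A : Finset ℕ} (h : A.Nonempty) : fmax A = A.max' h := h.csSup_eq_max'
lemma fmin_eq {A : Finset ℕ} (h : A.Nonempty) : fmin A = A.min' h := h.csInf_eq_min'

lemma fmin_mem {A : Finset ℕ} (h : A.Nonempty) : fmin A ∈ A := by
  rw [fmin_eq h]; exact A.min'_mem h

lemma fmin_le {A : Finset ℕ} {a : ℕ} (ha : a ∈ A) : fmin A ≤ a := by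
  rw [fmin_eq ⟨a, ha⟩]; exact A.min'_le a ha

lemma fmin_unique {A : Finset ℕ} {m : ℕ} (hm : m ∈ A) (h : ∀ a ∈ A, m ≤ a) : fmin A = m :=
  le_antisymm (fmin_le hm) (h _ (fmin_mem ⟨m, hm⟩))

lemma fmax_mem {A : Finset ℕ} (h : A.Nonempty) : fmax A ∈ A := by
  rw [fmax_eq h]; exact A.max'_mem h

lemma le_fmax {A : Finset ℕ} {a : ℕ} (ha : a ∈ A) : a ≤ fmax A := by
  rw [fmax_eq ⟨a, ha⟩]; exact A.le_max' a ha

lemma fmax_unique {A : Finset ℕ} {m : ℕ} (hm : m ∈ A) (h : ∀ a ∈ A, a ≤ m) : fmax A = m :=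
  le_antisymm (h _ (fmax_mem ⟨m, hm⟩)) (le_fmax hm)

lemma ngap_spec {A : Finset ℕ} {a : ℕ} (h : ∃ b ∈ A, a < b) :
    0 < ngap A a ∧ a + ngap A a ∈ A := by
  obtain ⟨b, hb, hab⟩ := h
  refine Nat.sInf_mem (⟨b - a, ?_⟩ : {m | 0 < m ∧ a + m ∈ A}.Nonempty)
  exact ⟨by omega, by rwa [show a + (b - a) = b by omega]⟩

lemma ngap_not_mem {A : Finset ℕ} {a m : ℕ} (h0 : 0 < m) (hm : m < ngap A a) : a + m ∉ A :=
  fun h => Nat.notMem_of_lt_sInf hm ⟨h0, h⟩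

lemma exists_snd {A : Finset ℕ} (h2 : 2 ≤ A.card) : ∃ b ∈ A, fmin A < b := by
  obtain ⟨a, ha, b, hb, hab⟩ := (Finset.one_lt_card (s := A)).mp (by omega)
  rcases eq_or_ne a (fmin A) with h | h
  · exact ⟨b, hb, by have := fmin_le hb; omega⟩
  · exact ⟨a, ha, by have := fmin_le ha; omega⟩

lemma fmin_lt_fmax {A : Finset ℕ} (h2 : 2 ≤ A.card) : fmin A < fmax A := by
  obtain ⟨b, hb, h⟩ := exists_snd h2
  exact lt_of_lt_of_le h (le_fmax hb)

noncomputable def ci (A : Finset ℕ) : ℕ := ngap A (fmin A)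
noncomputable def cA (A : Finset ℕ) : Finset ℕ := (A.erase (fmin A)).image (fun b => b - ci A)

lemma ci_spec {A : Finset ℕ} (h2 : 2 ≤ A.card) : 0 < ci A ∧ fmin A + ci A ∈ A :=
  ngap_spec (exists_snd h2)

lemma ci_le {A : Finset ℕ} {a : ℕ} (ha : a ∈ A.erase (fmin A)) :
    fmin A + ci A ≤ a := by
  rw [Finset.mem_erase] at ha
  have h1 := fmin_le ha.2
  by_contra h
  push_neg at h
  have hne : a ≠ fmin A := ha.1
  have := ngap_not_mem (A := A) (a := fmin A) (m := a - fmin A) (by omega)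
    (by simp only [ci] at h; omega)
  rw [show fmin A + (a - fmin A) = a by omega] at this
  exact this ha.2

lemma ci_add_le_fmax {A : Finset ℕ} (h2 : 2 ≤ A.card) : fmin A + ci A ≤ fmax A :=
  le_fmax (ci_spec h2).2

lemma mem_cA {A : Finset ℕ} {x : ℕ} :
    x ∈ cA A ↔ x + ci A ∈ A.erase (fmin A) := by
  simp only [cA, Finset.mem_image]
  constructor
  · rintro ⟨b, hb, rfl⟩
    have := ci_le hb
    rwa [show b - ci A + ci A = b by omega]
  · intro hx
    exact ⟨x + ci A, hx, by omega⟩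

lemma fmin_cA {A : Finset ℕ} (h2 : 2 ≤ A.card) : fmin (cA A) = fmin A := by
  obtain ⟨h0, hmem⟩ := ci_spec h2
  apply fmin_unique
  · rw [mem_cA, show fmin A + ci A = fmin A + ci A from rfl, Finset.mem_erase]
    exact ⟨by omega, hmem⟩
  · intro x hx
    have := ci_le (mem_cA.mp hx)
    omega

lemma fmax_cA {A : Finset ℕ} (h2 : 2 ≤ A.card) : fmax (cA A) = fmax A - ci A := by
  have hlt := fmin_lt_fmax h2
  have hle := ci_add_le_fmax h2
  have hmaxA : fmax A ∈ A := fmax_mem (Finset.card_pos.mp (by omega))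
  apply fmax_unique
  · rw [mem_cA, show fmax A - ci A + ci A = fmax A by omega, Finset.mem_erase]
    exact ⟨by omega, hmaxA⟩
  · intro x hx
    have hx' := (Finset.mem_erase.mp (mem_cA.mp hx)).2
    have := le_fmax hx'
    omega

lemma ngap_cA {A : Finset ℕ} {a : ℕ} (ha : a ∈ A.erase (fmin A)) (hamax : a ≠ fmax A) :
    ngap (cA A) (a - ci A) = ngap A a := by
  have hciA := ci_le ha
  have haA : a ∈ A := (Finset.mem_erase.mp ha).2
  have hfle := fmin_le haA
  obtain ⟨hpos, hmem⟩ := ngap_spec (a := a) (A := A)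
    ⟨fmax A, fmax_mem ⟨a, haA⟩, lt_of_le_of_ne (le_fmax haA) hamax⟩
  apply ngap_eq hpos
  · rw [mem_cA, show a - ci A + ngap A a + ci A = a + ngap A a by omega, Finset.mem_erase]
    exact ⟨by omega, hmem⟩
  · intro m' h0 hlt hmem'
    rw [mem_cA, show a - ci A + m' + ci A = a + m' by omega, Finset.mem_erase] at hmem'
    exact ngap_not_mem h0 hlt hmem'.2

noncomputable def wt {R : Type*} [CommRing R] (α : ℕ → R) (d : ℕ) (A : Finset ℕ) : R :=
  α (d - fmax A + fmin A) * ∏ a ∈ A.erase (fmax A), α (ngap A a)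

noncomputable def gsum {R : Type*} [CommRing R] (α : ℕ → R) (d : ℕ) : R :=
  ∑ A ∈ (Finset.range d).powerset.filter (fun A => A.Nonempty), wt α d A

lemma wt_contract {R : Type*} [CommRing R] (α : ℕ → R) {d : ℕ} {A : Finset ℕ}
    (hA : A ⊆ Finset.range d) (h2 : 2 ≤ A.card) :
    wt α d A = α (ci A) * wt α (d - ci A) (cA A) := by
  have hne : A.Nonempty := Finset.card_pos.mp (by omega)
  have hmaxd : fmax A < d := Finset.mem_range.mp (hA (fmax_mem hne))
  have hlt := fmin_lt_fmax h2
  have hle := ci_add_le_fmax h2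
  have hci0 := (ci_spec h2).1
  unfold wt
  rw [fmin_cA h2, fmax_cA h2]
  rw [show d - ci A - (fmax A - ci A) + fmin A = d - fmax A + fmin A by omega]
  have e2 : (cA A).erase (fmax A - ci A)
      = ((A.erase (fmin A)).erase (fmax A)).image (fun b => b - ci A) := by
    ext x
    simp only [Finset.mem_erase, mem_cA, Finset.mem_image]
    constructor
    · rintro ⟨hx, hmem, hmemA⟩
      exact ⟨x + ci A, ⟨by omega, hmem, hmemA⟩, by omega⟩
    · rintro ⟨b, ⟨hbmax, hbmin, hbA⟩, rfl⟩
      have := ci_le (Finset.mem_erase.mpr ⟨hbmin, hbA⟩)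
      refine ⟨by omega, by rw [show b - ci A + ci A = b by omega]; exact ⟨hbmin, hbA⟩⟩
  rw [e2, Finset.prod_image (fun x hx y hy hxy => by
    have hx' := ci_le (Finset.mem_erase.mp hx).2
    have hy' := ci_le (Finset.mem_erase.mp hy).2
    omega)]
  have e3 : ∏ x ∈ (A.erase (fmin A)).erase (fmax A), α (ngap (cA A) (x - ci A))
      = ∏ x ∈ (A.erase (fmin A)).erase (fmax A), α (ngap A x) :=
    Finset.prod_congr rfl (fun a ha => by
      rw [ngap_cA (Finset.mem_erase.mp ha).2 (Finset.mem_erase.mp ha).1])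
  rw [e3]
  have hminmem : fmin A ∈ A.erase (fmax A) :=
    Finset.mem_erase.mpr ⟨by omega, fmin_mem hne⟩
  rw [← Finset.mul_prod_erase (A.erase (fmax A)) _ hminmem]
  rw [Finset.erase_right_comm]
  show α (d - fmax A + fmin A) * (α (ci A) * _) = α (ci A) * (α (d - fmax A + fmin A) * _)
  ring

lemma notmem_image_add {i : ℕ} (hi : 0 < i) (A' : Finset ℕ) :
    fmin A' ∉ A'.image (fun a => a + i) := by
  simp only [Finset.mem_image, not_exists, not_and]
  intro a ha
  have := fmin_le ha
  omega

lemma fmin_insert_image {i : ℕ} (hi : 0 < i) {A' : Finset ℕ} (hne : A'.Nonempty) :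
    fmin (insert (fmin A') (A'.image (fun a => a + i))) = fmin A' := by
  apply fmin_unique (Finset.mem_insert_self _ _)
  intro x hx
  rcases Finset.mem_insert.mp hx with h | h
  · omega
  · obtain ⟨a, ha, rfl⟩ := Finset.mem_image.mp h
    have := fmin_le ha
    omega

lemma ci_insert_image {i : ℕ} (hi : 0 < i) {A' : Finset ℕ} (hne : A'.Nonempty) :
    ci (insert (fmin A') (A'.image (fun a => a + i))) = i := by
  rw [ci, fmin_insert_image hi hne]
  apply ngap_eq hi
  · exact Finset.mem_insert_of_mem (Finset.mem_image.mpr ⟨fmin A', fmin_mem hne, rfl⟩)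
  · intro m' h0 hlt hmem
    rcases Finset.mem_insert.mp hmem with h | h
    · omega
    · obtain ⟨a, ha, heq⟩ := Finset.mem_image.mp h
      have := fmin_le ha
      omega

lemma cA_insert_image {i : ℕ} (hi : 0 < i) {A' : Finset ℕ} (hne : A'.Nonempty) :
    cA (insert (fmin A') (A'.image (fun a => a + i))) = A' := by
  unfold cA
  rw [fmin_insert_image hi hne, ci_insert_image hi hne,
    Finset.erase_insert (notmem_image_add hi A'), Finset.image_image]
  have : ((fun b => b - i) ∘ fun a => a + i) = id := funext (fun a => by simp)
  rw [this, Finset.image_id]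

lemma gsum_rec {R : Type*} [CommRing R] (α : ℕ → R) {d : ℕ} (hd : 1 ≤ d) :
    gsum α d = d • α d + ∑ i ∈ Finset.Icc 1 (d - 1), α i * gsum α (d - i) := by
  classical
  set P := (Finset.range d).powerset with hP
  have hsplit : gsum α d = (∑ A ∈ P.filter (fun A => A.card = 1), wt α d A)
      + ∑ A ∈ P.filter (fun A => 2 ≤ A.card), wt α d A := by
    unfold gsum
    rw [← Finset.sum_filter_add_sum_filter_not (P.filter (fun A => A.Nonempty))
      (fun A => A.card = 1)]
    congr 1
    · apply Finset.sum_congr _ (fun _ _ => rfl)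
      ext A
      simp only [Finset.mem_filter, Finset.mem_powerset]
      constructor
      · rintro ⟨⟨h1, _⟩, h3⟩; exact ⟨h1, h3⟩
      · rintro ⟨h1, h3⟩; exact ⟨⟨h1, Finset.card_pos.mp (by omega)⟩, h3⟩
    · apply Finset.sum_congr _ (fun _ _ => rfl)
      ext A
      simp only [Finset.mem_filter, Finset.mem_powerset]
      constructor
      · rintro ⟨⟨h1, h2⟩, h3⟩
        have := Finset.one_le_card.mpr h2
        exact ⟨h1, by omega⟩
      · rintro ⟨h1, h3⟩
        exact ⟨⟨h1, Finset.card_pos.mp (by omega)⟩, by omega⟩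
  have hsing : ∑ A ∈ P.filter (fun A => A.card = 1), wt α d A = d • α d := by
    rw [← Finset.powersetCard_eq_filter, Finset.powersetCard_one, Finset.sum_map]
    have hterm : ∀ a ∈ Finset.range d, wt α d {a} = α d := by
      intro a ha
      have hd' : a < d := Finset.mem_range.mp ha
      have hmax : fmax {a} = a := fmax_unique (Finset.mem_singleton_self a)
        (fun x hx => le_of_eq (Finset.mem_singleton.mp hx))
      have hmin : fmin {a} = a := fmin_unique (Finset.mem_singleton_self a)
        (fun x hx => ge_of_eq (Finset.mem_singleton.mp hx))
      unfold wt
      rw [hmax, hmin, Finset.erase_singleton, Finset.prod_empty, mul_one,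
        show d - a + a = d by omega]
    calc ∑ a ∈ Finset.range d, wt α d {a} = ∑ a ∈ Finset.range d, α d :=
          Finset.sum_congr rfl hterm
      _ = d • α d := by rw [Finset.sum_const, Finset.card_range]
  have hbig : ∑ A ∈ P.filter (fun A => 2 ≤ A.card), wt α d A
      = ∑ i ∈ Finset.Icc 1 (d - 1), α i * gsum α (d - i) := by
    unfold gsum
    simp_rw [Finset.mul_sum]
    rw [Finset.sum_sigma' (Finset.Icc 1 (d - 1))
      (fun i => (Finset.range (d - i)).powerset.filter (fun A => A.Nonempty))
      (fun i A => α i * wt α (d - i) A)]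
    apply Finset.sum_bij' (i := fun A _ => (⟨ci A, cA A⟩ : Σ _ : ℕ, Finset ℕ))
      (j := fun p _ => insert (fmin p.2) (p.2.image (fun a => a + p.1)))
    · -- hi : maps into sigma set
      intro A hA
      rw [Finset.mem_filter, Finset.mem_powerset] at hA
      obtain ⟨hsub, h2⟩ := hA
      have hne : A.Nonempty := Finset.card_pos.mp (by omega)
      have hmaxd : fmax A < d := Finset.mem_range.mp (hsub (fmax_mem hne))
      have hle := ci_add_le_fmax h2
      have hci0 := (ci_spec h2).1
      rw [Finset.mem_sigma, Finset.mem_Icc, Finset.mem_filter, Finset.mem_powerset]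
      dsimp only
      refine ⟨⟨by omega, by omega⟩, ?_, ?_⟩
      · intro x hx
        have hx' := (Finset.mem_erase.mp (mem_cA.mp hx)).2
        have := le_fmax hx'
        have := ci_le (mem_cA.mp hx)
        rw [Finset.mem_range]
        omega
      · refine ⟨fmin A, ?_⟩
        rw [mem_cA, Finset.mem_erase]
        exact ⟨by omega, (ci_spec h2).2⟩
    · -- hj : maps back
      rintro ⟨i, A'⟩ hp
      rw [Finset.mem_sigma, Finset.mem_Icc, Finset.mem_filter, Finset.mem_powerset] at hp
      obtain ⟨⟨hi1, hi2⟩, hsub, hne⟩ := hp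
      dsimp only at hi1 hi2 hsub hne ⊢
      rw [Finset.mem_filter, Finset.mem_powerset]
      constructor
      · intro x hx
        rcases Finset.mem_insert.mp hx with h | h
        · have := Finset.mem_range.mp (hsub (h ▸ fmin_mem hne))
          rw [Finset.mem_range]; omega
        · obtain ⟨a, ha, rfl⟩ := Finset.mem_image.mp h
          have := Finset.mem_range.mp (hsub ha)
          rw [Finset.mem_range]; omega
      · rw [Finset.card_insert_of_notMem (notmem_image_add (by omega) A'),
          Finset.card_image_of_injective _ (add_left_injective i)]
        have := Finset.card_pos.mpr hne
        omega
    · -- left inverse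
      intro A hA
      rw [Finset.mem_filter, Finset.mem_powerset] at hA
      obtain ⟨hsub, h2⟩ := hA
      have hne : A.Nonempty := Finset.card_pos.mp (by omega)
      show insert (fmin (cA A)) ((cA A).image (fun a => a + ci A)) = A
      rw [fmin_cA h2]
      have himg : (cA A).image (fun a => a + ci A) = A.erase (fmin A) := by
        ext x
        simp only [Finset.mem_image]
        constructor
        · rintro ⟨y, hy, rfl⟩
          exact mem_cA.mp hy
        · intro hx
          have := ci_le hx
          exact ⟨x - ci A, mem_cA.mpr (by rwa [show x - ci A + ci A = x by omega]), by omega⟩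
      rw [himg, Finset.insert_erase (fmin_mem hne)]
    · -- right inverse
      rintro ⟨i, A'⟩ hp
      rw [Finset.mem_sigma, Finset.mem_Icc, Finset.mem_filter, Finset.mem_powerset] at hp
      obtain ⟨⟨hi1, hi2⟩, hsub, hne⟩ := hp
      dsimp only at hi1 hi2 hsub hne ⊢
      have h1 := ci_insert_image (by omega : 0 < i) hne
      have h2 := cA_insert_image (by omega : 0 < i) hne
      rw [Sigma.mk.inj_iff]
      exact ⟨h1, heq_of_eq h2⟩
    · -- weights
      intro A hA
      rw [Finset.mem_filter, Finset.mem_powerset] at hA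
      exact wt_contract α hA.1 hA.2
  rw [hsplit, hsing, hbig]

lemma gsum_zero {R : Type*} [CommRing R] (α : ℕ → R) : gsum α 0 = 0 := by
  unfold gsum
  rw [Finset.range_zero, Finset.powerset_empty, Finset.filter_singleton]
  simp

open PowerSeries in
lemma mk_gsum_mul {R : Type*} [CommRing R] (α : ℕ → R) (f : R⟦X⟧)
    (hf : f = mk fun i => if i = 0 then 0 else α i) :
    PowerSeries.mk (gsum α) * (1 - f) = X * (derivative R f) := by
  have hc : ∀ j : ℕ, (coeff j) (1 - f) = if j = 0 then 1 else -α j := by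
    intro j
    rw [map_sub, hf, coeff_mk, PowerSeries.coeff_one]
    split_ifs <;> simp
  ext n
  rw [PowerSeries.coeff_mul]
  rcases n with _ | m
  · simp only [Finset.Nat.antidiagonal_zero, Finset.sum_singleton, coeff_mk, gsum_zero,
      zero_mul]
    have : (coeff 0) (X * derivative R f) = 0 := by
      rw [PowerSeries.coeff_zero_eq_constantCoeff, map_mul, PowerSeries.constantCoeff_X,
        zero_mul]
    rw [this]
  · rw [Finset.Nat.sum_antidiagonal_eq_sum_range_succ_mk, coeff_succ_X_mul, coeff_derivative]
    rw [Finset.sum_range_succ]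
    simp only [coeff_mk, hc]
    have hterm : ∀ k ∈ Finset.range (m + 1),
        gsum α k * (if m + 1 - k = 0 then (1 : R) else -α (m + 1 - k))
          = -(α (m + 1 - k) * gsum α k) := by
      intro k hk
      rw [Finset.mem_range] at hk
      rw [if_neg (by omega)]
      ring
    rw [Finset.sum_congr rfl hterm, Finset.sum_neg_distrib]
    have hcf : (coeff (m + 1)) f = α (m + 1) := by rw [hf, coeff_mk]; simp
    rw [hcf, Nat.sub_self, if_pos rfl, mul_one]
    have hrec := gsum_rec α (d := m + 1) (by omega)
    simp only [Nat.add_sub_cancel] at hrec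
    have hre : ∑ k ∈ Finset.range (m + 1), α (m + 1 - k) * gsum α k
        = ∑ i ∈ Finset.Icc 1 m, α i * gsum α (m + 1 - i) := by
      rw [Finset.sum_range_succ', gsum_zero, mul_zero, add_zero]
      apply Finset.sum_nbij' (i := fun k => m - k) (j := fun i => m - i)
      · intro k hk; rw [Finset.mem_range] at hk; rw [Finset.mem_Icc]; omega
      · intro i hi; rw [Finset.mem_Icc] at hi; rw [Finset.mem_range]; omega
      · intro k hk; rw [Finset.mem_range] at hk; omega
      · intro i hi; rw [Finset.mem_Icc] at hi; omega
      · intro k hk; rw [Finset.mem_range] at hk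
        rw [show m + 1 - (k + 1) = m - k by omega, show m + 1 - (m - k) = k + 1 by omega]
    rw [hre, hrec, nsmul_eq_mul]
    push_cast
    ring

lemma cycGap_eq {d : ℕ} [NeZero d] {S : Finset (ZMod d)} {s : ZMod d} (hs : s ∈ S) :
    cycGap d S s = if s.val = fmax (S.image ZMod.val)
      then d - fmax (S.image ZMod.val) + fmin (S.image ZMod.val)
      else ngap (S.image ZMod.val) s.val := by
  have hd : 0 < d := Nat.pos_of_ne_zero (NeZero.ne d)
  set A := S.image ZMod.val with hA
  set a := s.val with ha
  have haA : a ∈ A := Finset.mem_image.mpr ⟨s, hs, rfl⟩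
  have hAd : ∀ x ∈ A, x < d := by
    intro x hx
    obtain ⟨s', _, rfl⟩ := Finset.mem_image.mp hx
    exact ZMod.val_lt s'
  have hmemA : ∀ x : ℕ, ((x : ZMod d) ∈ S) ↔ x % d ∈ A := by
    intro x
    constructor
    · intro h
      exact Finset.mem_image.mpr ⟨_, h, ZMod.val_natCast d x⟩
    · intro h
      obtain ⟨s', hs', hv⟩ := Finset.mem_image.mp h
      have : ((x % d : ℕ) : ZMod d) = s' := by
        rw [← hv]; exact ZMod.natCast_rightInverse s'
      rw [← ZMod.natCast_mod, this]
      exact hs'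
  have hs_cast : ∀ m : ℕ, s + (m : ZMod d) ∈ S ↔ (a + m) % d ∈ A := by
    intro m
    have : s + (m : ZMod d) = ((a + m : ℕ) : ZMod d) := by
      rw [Nat.cast_add, ha, ZMod.natCast_rightInverse s]
    rw [this, hmemA]
  unfold cycGap
  have hfmaxA : fmax A ∈ A := fmax_mem ⟨a, haA⟩
  have hfminA : fmin A ∈ A := fmin_mem ⟨a, haA⟩
  have hmaxd : fmax A < d := hAd _ hfmaxA
  have hmind : fmin A < d := hAd _ hfminA
  split_ifs with h
  · apply sInf_gap_eq (by omega)
    · rw [hs_cast, h, show fmax A + (d - fmax A + fmin A) = d + fmin A by omega,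
        Nat.add_mod_left, Nat.mod_eq_of_lt hmind]
      exact hfminA
    · intro m' h0 hlt hmem
      rw [hs_cast] at hmem
      rcases Nat.lt_or_ge (a + m') d with hcase | hcase
      · rw [Nat.mod_eq_of_lt hcase] at hmem
        have := le_fmax hmem
        omega
      · have hx : (a + m') % d = a + m' - d := by
          rw [Nat.mod_eq_sub_mod hcase]
          exact Nat.mod_eq_of_lt (by omega)
        rw [hx] at hmem
        have := fmin_le hmem
        omega
  · have halt : a < fmax A := lt_of_le_of_ne (le_fmax haA) h
    obtain ⟨hn0, hnmem⟩ := ngap_spec (A := A) (a := a) ⟨fmax A, hfmaxA, halt⟩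
    have hnd : a + ngap A a < d := hAd _ hnmem
    apply sInf_gap_eq hn0
    · rw [hs_cast, Nat.mod_eq_of_lt hnd]
      exact hnmem
    · intro m' h0 hlt hmem
      rw [hs_cast, Nat.mod_eq_of_lt (by omega)] at hmem
      exact ngap_not_mem h0 hlt hmem

lemma prod_cycGap {R : Type*} [CommRing R] (α : ℕ → R) {d : ℕ} [NeZero d]
    {S : Finset (ZMod d)} (hS : S.Nonempty) :
    ∏ s ∈ S, α (cycGap d S s) = wt α d (S.image ZMod.val) := by
  classical
  set A := S.image ZMod.val with hA
  have hAne : A.Nonempty := hS.image _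
  have hval : ∀ x ∈ S, ∀ y ∈ S, ZMod.val x = ZMod.val y → x = y :=
    fun x _ y _ h => ZMod.val_injective d h
  have h1 : ∏ s ∈ S, α (cycGap d S s)
      = ∏ a ∈ A, α (if a = fmax A then d - fmax A + fmin A else ngap A a) := by
    rw [hA, Finset.prod_image hval]
    exact Finset.prod_congr rfl (fun s hs => by rw [cycGap_eq hs])
  rw [h1, ← Finset.mul_prod_erase A _ (fmax_mem hAne), if_pos rfl]
  unfold wt
  congr 1
  exact Finset.prod_congr rfl (fun a ha => by rw [if_neg (Finset.mem_erase.mp ha).1])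

lemma cyc_sum_eq_gsum {R : Type*} [CommRing R] (α : ℕ → R) {d : ℕ} [NeZero d] :
    ∑ S ∈ (Finset.univ : Finset (ZMod d)).powerset.filter (fun S => S.Nonempty),
        ∏ s ∈ S, α (cycGap d S s) = gsum α d := by
  classical
  unfold gsum
  refine Finset.sum_bij' (fun S _ => S.image ZMod.val)
    (fun A _ => A.image (Nat.cast : ℕ → ZMod d)) ?hi ?hj ?left ?right ?h
  case hi =>
    intro S hS
    rw [Finset.mem_filter] at hS
    rw [Finset.mem_filter, Finset.mem_powerset]
    constructor
    · intro x hx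
      obtain ⟨s', _, rfl⟩ := Finset.mem_image.mp hx
      exact Finset.mem_range.mpr (ZMod.val_lt s')
    · exact hS.2.image _
  case hj =>
    intro A hA
    rw [Finset.mem_filter] at hA
    rw [Finset.mem_filter, Finset.mem_powerset]
    exact ⟨Finset.subset_univ _, hA.2.image _⟩
  case left =>
    intro S _
    rw [Finset.image_image]
    have : Set.EqOn ((Nat.cast : ℕ → ZMod d) ∘ ZMod.val) id (S : Set (ZMod d)) :=
      fun x _ => ZMod.natCast_rightInverse x
    rw [Finset.image_congr this, Finset.image_id]
  case right =>
    intro A hA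
    rw [Finset.mem_filter, Finset.mem_powerset] at hA
    have hA1 : A ⊆ Finset.range d := hA.1
    rw [Finset.image_image]
    have : Set.EqOn (ZMod.val ∘ (Nat.cast : ℕ → ZMod d)) id (A : Set ℕ) := by
      intro x hx
      exact ZMod.val_cast_of_lt (Finset.mem_range.mp (hA1 hx))
    rw [Finset.image_congr this, Finset.image_id]
  case h =>
    intro S hS
    rw [Finset.mem_filter] at hS
    exact prod_cycGap α hS.2

lemma total_eq_gsum {R : Type*} [CommRing R] (α : ℕ → R) (d : ℕ) :
    ∑ k ∈ Finset.Icc 1 d, cycCompSum α d k = gsum α d := by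
  classical
  rcases Nat.eq_zero_or_pos d with rfl | hd
  · simp [gsum_zero]
  haveI : NeZero d := ⟨by omega⟩
  rw [← cyc_sum_eq_gsum α (d := d)]
  rw [← Finset.sum_fiberwise_of_maps_to (g := Finset.card) (t := Finset.Icc 1 d)
    (fun S hS => by
      rw [Finset.mem_filter] at hS
      have h1 := Finset.card_pos.mpr hS.2
      have h2 : S.card ≤ d := by
        have := Finset.card_le_univ S
        rwa [ZMod.card d] at this
      rw [Finset.mem_Icc]; omega)
    (fun S => ∏ s ∈ S, α (cycGap d S s))]
  apply Finset.sum_congr rfl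
  intro k hk
  rw [Finset.mem_Icc] at hk
  rw [cycCompSum, dif_neg (by omega : ¬ d = 0)]
  apply Finset.sum_congr _ (fun _ _ => rfl)
  rw [Finset.powersetCard_eq_filter, Finset.filter_filter]
  apply Finset.filter_congr
  intro S _
  constructor
  · exact fun h => ⟨Finset.card_pos.mp (by omega), h⟩
  · exact fun h => h.2

open PowerSeries in
/-- With `f(t) = Σ_{i ≥ 1} α_i t^i` and `γ_d = Σ_{k ≥ 1} γ_{d,k}` (there are no cyclic
compositions of `d` into more than `d` parts, so `Σ_{k=1}^{d}` suffices), we have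
`Σ_{d ≥ 1} γ_d t^d = t · f′(t) / (1 - f(t))` as formal power series, where the inverse
of `1 - f` exists since `f` has zero constant term (its constant coefficient is the
unit `1`, and we use the corresponding formal inverse `invOfUnit (1 - f) 1`). -/
theorem cyclic_composition_genfun_total {R : Type*} [CommRing R] (α : ℕ → R)
    (f : R⟦X⟧) (hf : f = mk fun i => if i = 0 then 0 else α i) :
    mk (fun d => ∑ k ∈ Finset.Icc 1 d, cycCompSum α d k)
      = X * (derivative R f) * invOfUnit (1 - f) 1 := by
  have hγ : (mk fun d => ∑ k ∈ Finset.Icc 1 d, cycCompSum α d k) = mk (gsum α) := by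
    apply PowerSeries.ext
    intro n
    rw [coeff_mk, coeff_mk, total_eq_gsum]
  have hmul := mk_gsum_mul α f hf
  have hconst : constantCoeff (1 - f) = ((1 : Rˣ) : R) := by
    rw [map_sub, hf]
    simp
  have hu : (1 - f) * invOfUnit (1 - f) 1 = 1 := PowerSeries.mul_invOfUnit _ _ hconst
  calc (mk fun d => ∑ k ∈ Finset.Icc 1 d, cycCompSum α d k) = mk (gsum α) := hγ
    _ = mk (gsum α) * ((1 - f) * invOfUnit (1 - f) 1) := by rw [hu, mul_one]
    _ = (mk (gsum α) * (1 - f)) * invOfUnit (1 - f) 1 := by ring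
    _ = X * (derivative R f) * invOfUnit (1 - f) 1 := by rw [hmul]
end

section
/- Let α_i = C_{i−1} + δ_{i,1}, where δ_{i,1} is the Kronecker delta and C_m is the m-th Catalan number. Then for every d ≥ 1, the central binomial coefficient satisfies binomial(2d, d) = Σ_𝒫 α_{a_1}·α_{a_2}⋯α_{a_k}, where the sum is over all cyclic compositions 𝒫 of d (into any number k ≥ 1 of parts) with part sizes a_1,…,a_k. -/
set_option maxHeartbeats 1000000


open Finset List


/-- finset of compositions of `n` (lists of positive naturals with sum `n`) -/
def comps : ℕ → Finset (List ℕ)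
  | 0 => {[]}
  | (n+1) => (Finset.range (n+1)).attach.biUnion
      fun b => (comps b.1).image (List.cons (n+1 - b.1))
decreasing_by exact Finset.mem_range.mp b.2

theorem mem_comps : ∀ n l, l ∈ comps n ↔ l.sum = n ∧ ∀ x ∈ l, 0 < x := by
  intro n
  induction n using Nat.strong_induction_on with
  | _ n IH =>
    intro l
    match n with
    | 0 =>
      simp only [comps, Finset.mem_singleton]
      constructor
      · rintro rfl; simp
      · rintro ⟨hs, hp⟩
        cases l with
        | nil => rfl
        | cons x t => exact absurd hs (by have := hp x (by simp); simp; omega)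
    | (n+1) =>
      rw [comps]
      simp only [Finset.mem_biUnion, Finset.mem_attach, Finset.mem_image, true_and,
        Subtype.exists, Finset.mem_range]
      constructor
      · rintro ⟨b, hb, t, ht, rfl⟩
        rw [IH b hb] at ht
        refine ⟨by simp [ht.1]; omega, ?_⟩
        intro x hx
        rcases List.mem_cons.mp hx with rfl | hx
        · omega
        · exact ht.2 x hx
      · rintro ⟨hs, hp⟩
        cases l with
        | nil => simp at hs
        | cons x t =>
          have hx : 0 < x := hp x (by simp)
          have hsx : x + t.sum = n + 1 := by simpa using hs
          refine ⟨t.sum, by omega, t, ?_, by congr 1; omega⟩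
          rw [IH t.sum (by omega)]
          exact ⟨rfl, fun y hy => hp y (List.mem_cons_of_mem _ hy)⟩

theorem sum_comps (α : ℕ → ℕ)
    (hα : ∀ i, α i = catalan (i - 1) + if i = 1 then 1 else 0) :
    ∀ n, (∑ l ∈ comps n, (l.map α).prod) = catalan (n + 1) := by
  intro n
  induction n using Nat.strong_induction_on with
  | _ n IH =>
    match n with
    | 0 => simp [comps]
    | (n+1) =>
      rw [comps, Finset.sum_biUnion, Finset.sum_attach _
        (fun b => ∑ l ∈ (comps b).image (List.cons (n+1-b)), (l.map α).prod)]
      · have step : ∀ b ∈ Finset.range (n+1),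
            (∑ l ∈ (comps b).image (List.cons (n+1-b)), (l.map α).prod)
            = α (n+1-b) * catalan (b+1) := by
          intro b hb
          rw [Finset.sum_image (by intro x _ y _ h; exact (List.cons.injEq _ _ _ _).mp h |>.2)]
          rw [← IH b (Finset.mem_range.mp hb), Finset.mul_sum]
          simp
        rw [Finset.sum_congr rfl step]
        have expand : ∀ b ∈ Finset.range (n+1),
            α (n+1-b) * catalan (b+1)
            = catalan (n-b) * catalan (b+1) + if b = n then catalan (n+1) else 0 := by
          intro b hb
          have hb' := Finset.mem_range.mp hb
          rw [hα]
          have h1 : n + 1 - b - 1 = n - b := by omega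
          have h2 : (n + 1 - b = 1) = (b = n) := by
            apply propext; constructor <;> omega
          rw [h1, add_mul]
          simp only [h2]
          split <;> simp_all
        rw [Finset.sum_congr rfl expand, Finset.sum_add_distrib, Finset.sum_ite_eq'
          (Finset.range (n+1)) n (fun _ => catalan (n+1))]
        simp only [Finset.mem_range, Nat.lt_succ_self, if_true]
        -- now: ∑ b in range (n+1), catalan (n-b) * catalan (b+1) + catalan (n+1) = catalan (n+2)
        have hcat : catalan (n+1+1) = ∑ i ∈ Finset.range (n+1+1), catalan i * catalan (n+1-i) := by
          rw [catalan_succ (n+1)]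
          exact Fin.sum_univ_eq_sum_range (fun i => catalan i * catalan (n + 1 - i)) (n+1+1)
        rw [Finset.sum_range_succ] at hcat
        have hrefl : ∑ i ∈ Finset.range (n+1), catalan i * catalan (n+1-i)
            = ∑ b ∈ Finset.range (n+1), catalan (n-b) * catalan (b+1) := by
          rw [← Finset.sum_range_reflect]
          apply Finset.sum_congr rfl
          intro b hb
          have hb' := Finset.mem_range.mp hb
          congr 1 <;> congr 1 <;> omega
        simp only [Nat.sub_self, catalan_zero, mul_one] at hcat
        rw [hrefl] at hcat
        omega
      · -- pairwise disjoint
        intro x _ y _ hxy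
        simp only [Function.onFun, Finset.disjoint_left]
        intro l hl hl'
        simp only [Finset.mem_image] at hl hl'
        obtain ⟨t, _, rfl⟩ := hl
        obtain ⟨t', _, h⟩ := hl'
        have h1 := (List.cons.injEq _ _ _ _).mp h |>.1
        have hx := Finset.mem_range.mp x.2
        have hy := Finset.mem_range.mp y.2
        exact hxy (Subtype.ext (by omega))

theorem arith_lemma (d : ℕ) (hd : 0 < d) (α : ℕ → ℕ)
    (hα : ∀ i, α i = catalan (i - 1) + if i = 1 then 1 else 0) :
    (2 * d).choose d = ∑ a ∈ Finset.Icc 1 d, a * (α a * catalan (d - a + 1)) := by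
  have hIcc : ∑ a ∈ Finset.Icc 1 d, a * (α a * catalan (d - a + 1))
      = ∑ i ∈ Finset.range d, (1 + i) * (α (1 + i) * catalan (d - (1 + i) + 1)) := by
    rw [← Finset.Ico_add_one_right_eq_Icc, Finset.sum_Ico_eq_sum_range]
    simp
  rw [hIcc]
  have expand : ∀ i ∈ Finset.range d,
      (1 + i) * (α (1 + i) * catalan (d - (1 + i) + 1))
      = (i + 1) * (catalan i * catalan (d - i)) + if i = 0 then catalan d else 0 := by
    intro i hi
    have hi' := Finset.mem_range.mp hi
    rw [hα]
    have h1 : 1 + i - 1 = i := by omega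
    have h2 : (1 + i = 1) = (i = 0) := by apply propext; constructor <;> omega
    have h3 : d - (1 + i) + 1 = d - i := by omega
    rw [h1, h3]
    simp only [h2]
    split
    · rename_i h; subst h; simp; omega
    · rename_i h; simp [Nat.add_comm 1 i]
  rw [Finset.sum_congr rfl expand, Finset.sum_add_distrib,
    Finset.sum_ite_eq' (Finset.range d) 0 (fun _ => catalan d)]
  simp only [Finset.mem_range, hd, if_true]
  set S := ∑ i ∈ Finset.range d, (i + 1) * (catalan i * catalan (d - i)) with hS
  set c := catalan d with hc
  set c' := catalan (d + 1) with hc'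
  set x := d.centralBinom with hx
  set y := (d + 1).centralBinom with hy
  have hA : S + (d + 1) * c = ∑ i ∈ Finset.range (d + 1), (i + 1) * (catalan i * catalan (d - i)) := by
    rw [Finset.sum_range_succ, Nat.sub_self]
    simp [hc, hS]
  have hrefl : ∑ i ∈ Finset.range (d + 1), (i + 1) * (catalan i * catalan (d - i))
      = ∑ i ∈ Finset.range (d + 1), (d - i + 1) * (catalan (d - i) * catalan i) := by
    have h := Finset.sum_range_reflect (fun i => (i + 1) * (catalan i * catalan (d - i))) (d + 1)
    rw [← h]
    apply Finset.sum_congr rfl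
    intro i hi
    have hi' := Finset.mem_range.mp hi
    show (d + 1 - 1 - i + 1) * (catalan (d + 1 - 1 - i) * catalan (d - (d + 1 - 1 - i)))
        = (d - i + 1) * (catalan (d - i) * catalan i)
    have h5 : d + 1 - 1 - i = d - i := by omega
    have h4 : d - (d - i) = i := by omega
    rw [h5, h4]
  have h2A : (∑ i ∈ Finset.range (d + 1), (i + 1) * (catalan i * catalan (d - i)))
      + (∑ i ∈ Finset.range (d + 1), (i + 1) * (catalan i * catalan (d - i)))
      = (d + 2) * c' := by
    nth_rewrite 2 [hrefl]
    rw [← Finset.sum_add_distrib]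
    have : ∀ i ∈ Finset.range (d + 1),
        (i + 1) * (catalan i * catalan (d - i)) + (d - i + 1) * (catalan (d - i) * catalan i)
        = (d + 2) * (catalan i * catalan (d - i)) := by
      intro i hi
      have hi' := Finset.mem_range.mp hi
      have : (d - i + 1) * (catalan (d - i) * catalan i)
          = (d - i + 1) * (catalan i * catalan (d - i)) := by ring
      rw [this, ← Nat.add_mul]
      congr 1
      omega
    rw [Finset.sum_congr rfl this, ← Finset.mul_sum]
    congr 1
    rw [hc', catalan_succ d]
    exact (Fin.sum_univ_eq_sum_range (fun i => catalan i * catalan (d - i)) (d + 1)).symm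
  have f1 : (d + 1) * c = x := succ_mul_catalan_eq_centralBinom d
  have f2 : (d + 2) * c' = y := succ_mul_catalan_eq_centralBinom (d + 1)
  have f3 : (d + 1) * y = 2 * (2 * d + 1) * x := Nat.succ_mul_centralBinom_succ d
  have e1 : 2 * S + 2 * x = y := by omega
  have e2 : (d + 1) * (2 * S + 2 * x) = (d + 1) * y := by rw [e1]
  have e3 : (d + 1) * (2 * S + 2 * x) = 2 * ((d + 1) * S) + 2 * ((d + 1) * x) := by ring
  have e4 : 2 * (2 * d + 1) * x = 2 * (d * x) + 2 * ((d + 1) * x) := by ring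
  have e5 : 2 * ((d + 1) * S) = 2 * (d * x) := by omega
  have key : 2 * (d + 1) * (S + c) = 2 * (d + 1) * x := by
    calc 2 * (d + 1) * (S + c) = 2 * ((d + 1) * S) + 2 * ((d + 1) * c) := by ring
      _ = 2 * (d * x) + 2 * x := by rw [e5, f1]
      _ = 2 * (d + 1) * x := by ring
  have : (2 * d).choose d = x := (Nat.centralBinom_eq_two_mul_choose d).symm
  rw [this]
  exact ((Nat.eq_of_mul_eq_mul_left (show 0 < 2 * (d + 1) by omega) key)).symm


def ptsL : ℕ → List ℕ → List ℕ
  | j, [] => [j]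
  | j, a :: t => j :: ptsL (j + a) t

def dfs : List ℕ → List ℕ
  | [] => []
  | [_] => []
  | a :: b :: t => (b - a) :: dfs (b :: t)

@[simp] theorem ptsL_ne_nil (j : ℕ) (l : List ℕ) : ptsL j l ≠ [] := by
  cases l <;> simp [ptsL]

@[simp] theorem ptsL_length (j : ℕ) (l : List ℕ) : (ptsL j l).length = l.length + 1 := by
  induction l generalizing j with
  | nil => rfl
  | cons a t IH => simp [ptsL, IH]

theorem ptsL_head (j : ℕ) (l : List ℕ) (h : ptsL j l ≠ []) : (ptsL j l).head h = j := by
  cases l <;> rfl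

theorem mem_ptsL_bounds (j x : ℕ) (l : List ℕ) (h : x ∈ ptsL j l) :
    j ≤ x ∧ x ≤ j + l.sum := by
  induction l generalizing j with
  | nil => simp [ptsL] at h; omega
  | cons a t IH =>
    simp only [ptsL, List.mem_cons] at h
    rcases h with rfl | h
    · simp
    · have := IH (j + a) h
      simp only [List.sum_cons]
      omega

theorem ptsL_getLast (j : ℕ) (l : List ℕ) (h : ptsL j l ≠ []) :
    (ptsL j l).getLast h = j + l.sum := by
  induction l generalizing j with
  | nil => simp [ptsL]
  | cons a t IH =>
    simp only [ptsL]
    rw [List.getLast_cons (ptsL_ne_nil _ _), IH (j + a)]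
    simp
    omega

theorem ptsL_mem (j : ℕ) (l : List ℕ) : j ∈ ptsL j l := by
  cases l <;> simp [ptsL]

theorem ptsL_sorted (j : ℕ) (l : List ℕ) (hl : ∀ x ∈ l, 0 < x) :
    (ptsL j l).Pairwise (· < ·) := by
  induction l generalizing j with
  | nil => simp [ptsL]
  | cons a t IH =>
    simp only [ptsL, List.pairwise_cons]
    refine ⟨fun b hb => ?_, IH (j + a) (fun x hx => hl x (List.mem_cons_of_mem _ hx))⟩
    have := mem_ptsL_bounds _ _ _ hb
    have := hl a (by simp)
    omega

theorem dfs_ptsL (j : ℕ) (l : List ℕ) : dfs (ptsL j l) = l := by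
  induction l generalizing j with
  | nil => rfl
  | cons a t IH =>
    cases t with
    | nil => simp [ptsL, dfs]
    | cons b t' =>
      show dfs (j :: ptsL (j + a) (b :: t')) = a :: b :: t'
      have : ptsL (j + a) (b :: t') = (j + a) :: ptsL (j + a + b) t' := rfl
      rw [this]
      show (j + a - j) :: dfs ((j + a) :: ptsL (j + a + b) t') = a :: b :: t'
      rw [← this, IH (j + a)]
      congr 1
      omega

theorem ptsL_reconstruct : ∀ (xs : List ℕ) (h : xs ≠ []), xs.Pairwise (· ≤ ·) →
    ptsL (xs.head h) (dfs xs) = xs := by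
  intro xs
  induction xs with
  | nil => intro h; exact absurd rfl h
  | cons x t IH =>
    intro _ hs
    cases t with
    | nil => rfl
    | cons y t' =>
      have hxy : x ≤ y := (List.pairwise_cons.mp hs).1 y (by simp)
      have hs' : (y :: t').Pairwise (· ≤ ·) := (List.pairwise_cons.mp hs).2
      show ptsL x ((y - x) :: dfs (y :: t')) = x :: y :: t'
      show x :: ptsL (x + (y - x)) (dfs (y :: t')) = x :: y :: t'
      have hx : x + (y - x) = y := by omega
      rw [hx]
      have := IH (by simp) hs'
      simp only [List.head_cons] at this
      rw [this]

theorem dfs_pos : ∀ (xs : List ℕ), xs.Pairwise (· < ·) → ∀ g ∈ dfs xs, 0 < g := by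
  intro xs
  induction xs with
  | nil => simp [dfs]
  | cons x t IH =>
    intro hs
    cases t with
    | nil => simp [dfs]
    | cons y t' =>
      have hxy : x < y := (List.pairwise_cons.mp hs).1 y (by simp)
      have hs' : (y :: t').Pairwise (· < ·) := (List.pairwise_cons.mp hs).2
      intro g hg
      simp only [dfs, List.mem_cons] at hg
      rcases hg with rfl | hg
      · omega
      · exact IH hs' g hg

theorem ptsL_get (j : ℕ) (l : List ℕ) (i : ℕ) (hi : i < l.length + 1) :
    (ptsL j l).get ⟨i, by simp [hi]⟩ = j + (l.take i).sum := by
  induction l generalizing j i with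
  | nil =>
    have h0 : i = 0 := by simpa using hi
    subst h0
    simp [ptsL]
  | cons a t IH =>
    cases i with
    | zero => simp [ptsL]
    | succ i' =>
      show (ptsL (j + a) t).get ⟨i', _⟩ = _
      rw [IH (j + a) i' (by simpa using hi)]
      simp
      omega

theorem natCast_inj_lt (d : ℕ) (u v : ℕ) (hu : u < d) (hv : v < d)
    (h : (u : ZMod d) = v) : u = v := by
  haveI : NeZero d := ⟨by omega⟩
  have h2 := congrArg ZMod.val h
  rwa [ZMod.val_cast_of_lt hu, ZMod.val_cast_of_lt hv] at h2

theorem cycGap_spec (d : ℕ) (hd : 0 < d) (T : Finset ℕ) (hT : ∀ x ∈ T, x < d) (t g : ℕ)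
    (hg0 : 0 < g) (hmem : (t + g) % d ∈ T)
    (hnot : ∀ m, 0 < m → m < g → (t + m) % d ∉ T) :
    cycGap d (T.image (Nat.cast : ℕ → ZMod d)) (t : ZMod d) = g := by
  set S := T.image (Nat.cast : ℕ → ZMod d) with hS
  have castmod : ∀ m : ℕ, (t : ZMod d) + (m : ZMod d) = (((t + m) % d : ℕ) : ZMod d) := by
    intro m
    rw [ZMod.natCast_mod]
    push_cast
    ring
  have hgA : 0 < g ∧ (t : ZMod d) + (g : ZMod d) ∈ S := by
    refine ⟨hg0, ?_⟩
    rw [castmod]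
    exact Finset.mem_image.mpr ⟨(t + g) % d, hmem, rfl⟩
  have hnomem : ∀ m, 0 < m → m < g → ¬((t : ZMod d) + (m : ZMod d) ∈ S) := by
    intro m hm hmg hmem'
    rw [castmod] at hmem'
    obtain ⟨w, hw, hweq⟩ := Finset.mem_image.mp hmem'
    have hwd := hT w hw
    have : w = (t + m) % d := natCast_inj_lt d w _ hwd (Nat.mod_lt _ hd) hweq
    exact hnot m hm hmg (this ▸ hw)
  have hne : {m : ℕ | 0 < m ∧ (t : ZMod d) + (m : ZMod d) ∈ S}.Nonempty := ⟨g, hgA⟩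
  have hmemInf := Nat.sInf_mem hne
  apply _root_.le_antisymm
  · exact Nat.sInf_le hgA
  · by_contra hlt
    push_neg at hlt
    exact hnomem _ hmemInf.1 hlt hmemInf.2

theorem sum_take_le (xs : List ℕ) (k : ℕ) : (xs.take k).sum ≤ xs.sum := by
  conv_rhs => rw [← List.take_append_drop k xs]
  rw [List.sum_append]
  omega

theorem sum_take_mono (l : List ℕ) (k1 k2 : ℕ) (h : k1 ≤ k2) :
    (l.take k1).sum ≤ (l.take k2).sum := by
  have h1 : l.take k1 = (l.take k2).take k1 := by
    rw [List.take_take, Nat.min_eq_left h]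
  rw [h1]
  exact sum_take_le _ _

theorem prod_cycGap_s7 (d : ℕ) (hd : 0 < d) (α : ℕ → ℕ) (a j : ℕ) (l : List ℕ)
    (ha1 : 1 ≤ a) (had : a ≤ d) (hj : j < a) (hsum : l.sum = d - a) (hpos : ∀ x ∈ l, 0 < x) :
    ∏ s ∈ ((ptsL j l).toFinset.image (Nat.cast : ℕ → ZMod d)),
      α (cycGap d ((ptsL j l).toFinset.image (Nat.cast : ℕ → ZMod d)) s)
    = α a * (l.map α).prod := by
  set xs := ptsL j l with hxs
  have hlen : xs.length = l.length + 1 := ptsL_length j l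
  have hsorted : xs.Pairwise (· < ·) := ptsL_sorted j l hpos
  have hnodup : xs.Nodup := hsorted.nodup
  have hbound : ∀ x ∈ xs, x < d := by
    intro x hx
    have := mem_ptsL_bounds j x l hx
    omega
  set T := xs.toFinset with hTdef
  have hT : ∀ x ∈ T, x < d := fun x hx => hbound x (List.mem_toFinset.mp hx)
  set S := T.image (Nat.cast : ℕ → ZMod d) with hSdef
  have hmem_char : ∀ x ∈ xs, ∃ k, k < l.length + 1 ∧ x = j + (l.take k).sum := by
    intro x hx
    obtain ⟨⟨k, hk⟩, hkeq⟩ := List.mem_iff_get.mp hx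
    refine ⟨k, by omega, ?_⟩
    rw [← hkeq]
    exact ptsL_get j l k (by omega)
  have hmem_char' : ∀ k, k < l.length + 1 → j + (l.take k).sum ∈ xs := by
    intro k hk
    rw [← ptsL_get j l k hk]
    exact xs.get_mem _
  have hgap_lt : ∀ (i : ℕ) (h : i < l.length),
      cycGap d S ((j + (l.take i).sum : ℕ) : ZMod d) = l.get ⟨i, h⟩ := by
    intro i h
    have htake : (l.take (i + 1)).sum = (l.take i).sum + l.get ⟨i, h⟩ := List.sum_take_succ l i h
    have hgpos : 0 < l.get ⟨i, h⟩ := hpos _ (l.get_mem ⟨i, h⟩)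
    have hsum_take : (l.take (i + 1)).sum ≤ l.sum := sum_take_le l (i + 1)
    have hnd : j + (l.take i).sum + l.get ⟨i, h⟩ < d := by omega
    apply cycGap_spec d hd T hT _ _ hgpos
    · rw [Nat.mod_eq_of_lt hnd]
      apply List.mem_toFinset.mpr
      rw [show j + (l.take i).sum + l.get ⟨i, h⟩ = j + (l.take (i + 1)).sum by omega]
      exact hmem_char' (i + 1) (by omega)
    · intro m hm hmg hmemT
      rw [Nat.mod_eq_of_lt (by omega)] at hmemT
      obtain ⟨k, hk, hkeq⟩ := hmem_char _ (List.mem_toFinset.mp hmemT)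
      rcases le_or_gt k i with hki | hki
      · have := sum_take_mono l k i hki
        omega
      · have := sum_take_mono l (i + 1) k hki
        omega
  have hgap_last : cycGap d S (((j + l.sum : ℕ)) : ZMod d) = a := by
    apply cycGap_spec d hd T hT _ _ (show 0 < a by omega)
    · have he : j + l.sum + a = j + d := by omega
      rw [he, Nat.add_mod_right, Nat.mod_eq_of_lt (by omega)]
      exact List.mem_toFinset.mpr (ptsL_mem j l)
    · intro m hm hma hmemT
      rcases lt_or_ge (j + l.sum + m) d with hcase | hcase
      · rw [Nat.mod_eq_of_lt hcase] at hmemT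
        have := mem_ptsL_bounds j _ l (List.mem_toFinset.mp hmemT)
        omega
      · have hmod : (j + l.sum + m) % d = j + l.sum + m - d := by
          rw [Nat.mod_eq_sub_mod hcase, Nat.mod_eq_of_lt (by omega)]
        rw [hmod] at hmemT
        have := mem_ptsL_bounds j _ l (List.mem_toFinset.mp hmemT)
        omega
  rw [Finset.prod_image (by
    intro x hx y hy hxy
    exact natCast_inj_lt d x y (hT x hx) (hT y hy) hxy)]
  rw [hTdef, List.prod_toFinset _ hnodup]
  have hmain : xs.map (fun t => α (cycGap d S ((t : ℕ) : ZMod d))) = l.map α ++ [α a] := by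
    apply List.ext_get
    · simp [hlen]
    intro i hi1 hi2
    simp only [List.length_map, hlen] at hi1
    rw [List.get_eq_getElem, List.getElem_map]; change α (cycGap d S ((xs.get ⟨i, by omega⟩ : ℕ) : ZMod d)) = _
    have hget : xs.get ⟨i, by omega⟩ = j + (l.take i).sum := ptsL_get j l i (by omega)
    by_cases hcase : i < l.length
    · have hR : (l.map α ++ [α a]).get ⟨i, hi2⟩ = α (l.get ⟨i, hcase⟩) := by
        rw [List.get_eq_getElem, List.getElem_append_left (by simpa using hcase)]
        simp
      rw [hR, hget, hgap_lt i hcase]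
    · have hieq : i = l.length := by omega
      subst hieq
      have hR : (l.map α ++ [α a]).get ⟨l.length, hi2⟩ = α a := by
        rw [List.get_eq_getElem, List.getElem_concat_length]
        simp
      rw [hR, hget, List.take_length, hgap_last]
  rw [hmain, List.prod_append]
  simp [Nat.mul_comm]

theorem sort_ne_nil (T : Finset ℕ) (h : T.Nonempty) : T.sort (· ≤ ·) ≠ [] := by
  intro hc
  have hl := Finset.length_sort (α := ℕ) (· ≤ ·) (s := T)
  rw [hc] at hl
  simp at hl
  exact h.ne_empty (Finset.card_eq_zero.mp hl.symm)

theorem head_le_of_sorted (xs : List ℕ) (h : xs ≠ []) (hs : xs.Pairwise (· ≤ ·)) :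
    ∀ x ∈ xs, xs.head h ≤ x := by
  cases xs with
  | nil => exact absurd rfl h
  | cons y t =>
    intro x hx
    rcases List.mem_cons.mp hx with rfl | hx
    · exact le_refl _
    · exact (List.pairwise_cons.mp hs).1 x hx

theorem le_getLast_of_sorted : ∀ (xs : List ℕ) (h : xs ≠ []), xs.Pairwise (· ≤ ·) →
    ∀ x ∈ xs, x ≤ xs.getLast h := by
  intro xs
  induction xs with
  | nil => intro h; exact absurd rfl h
  | cons y t IH =>
    intro h hs x hx
    cases t with
    | nil => simp at hx; simp [hx]
    | cons z t' =>
      rw [List.getLast_cons (by simp)]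
      rcases List.mem_cons.mp hx with rfl | hx
      · exact le_trans ((List.pairwise_cons.mp hs).1 z (by simp))
          (IH (by simp) (List.pairwise_cons.mp hs).2 z (by simp))
      · exact IH (by simp) (List.pairwise_cons.mp hs).2 x hx

theorem sort_head_min' (T : Finset ℕ) (h : T.Nonempty) :
    (T.sort (· ≤ ·)).head (sort_ne_nil T h) = T.min' h := by
  apply _root_.le_antisymm
  · exact head_le_of_sorted _ _ (Finset.pairwise_sort _ _) _
      ((Finset.mem_sort _).mpr (T.min'_mem h))
  · exact T.min'_le _ ((Finset.mem_sort (α := ℕ) (· ≤ ·)).mp (List.head_mem _))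

theorem sort_getLast_max' (T : Finset ℕ) (h : T.Nonempty) :
    (T.sort (· ≤ ·)).getLast (sort_ne_nil T h) = T.max' h := by
  apply _root_.le_antisymm
  · exact T.le_max' _ ((Finset.mem_sort (α := ℕ) (· ≤ ·)).mp (List.getLast_mem _))
  · exact le_getLast_of_sorted _ _ (Finset.pairwise_sort _ _) _
      ((Finset.mem_sort _).mpr (T.max'_mem h))

theorem toFinset_sort (T : Finset ℕ) : (T.sort (· ≤ ·)).toFinset = T := by
  ext x
  simp [List.mem_toFinset, Finset.mem_sort]

theorem sort_toFinset_of_sorted (xs : List ℕ) (hs : xs.Pairwise (· < ·)) :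
    xs.toFinset.sort (· ≤ ·) = xs := by
  have hnd : xs.Nodup := hs.nodup
  have hperm : (xs.toFinset.sort (· ≤ ·)).Perm xs := by
    apply List.perm_of_nodup_nodup_toFinset_eq (Finset.sort_nodup _ _) hnd
    exact toFinset_sort _
  exact List.Perm.eq_of_pairwise' (Finset.pairwise_sort _ _) (hs.imp le_of_lt) hperm

theorem dfs_sum : ∀ (xs : List ℕ) (h : xs ≠ []), xs.Pairwise (· ≤ ·) →
    (dfs xs).sum + xs.head h = xs.getLast h := by
  intro xs
  induction xs with
  | nil => intro h; exact absurd rfl h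
  | cons y t IH =>
    intro h hs
    cases t with
    | nil => simp [dfs]
    | cons z t' =>
      have hyz : y ≤ z := (List.pairwise_cons.mp hs).1 z (by simp)
      have hIH := IH (by simp) (List.pairwise_cons.mp hs).2
      rw [List.getLast_cons (by simp)]
      show (z - y) + (dfs (z :: t')).sum + y = _
      simp only [List.head_cons] at hIH
      omega


/-- Let `α_i = C_{i-1} + δ_{i,1}` (Catalan number plus Kronecker delta).  Then for
`d ≥ 1`, `binomial (2d) d = Σ_𝒫 α_{a_1} ⋯ α_{a_k}`, summed over all cyclic
compositions `𝒫` of `d` into any number `k ≥ 1` of parts. -/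
theorem central_binomial_eq_cyclic_composition_sum (d : ℕ) [NeZero d] (α : ℕ → ℕ)
    (hα : ∀ i, α i = catalan (i - 1) + if i = 1 then 1 else 0) :
    (2 * d).choose d
      = ∑ S ∈ (Finset.univ : Finset (ZMod d)).powerset.filter (fun S => S.Nonempty),
          ∏ s ∈ S, α (cycGap d S s) := by
  classical
  have hd : 0 < d := Nat.pos_of_ne_zero (NeZero.ne d)
  have himg : ∀ T : Finset ℕ, T ⊆ Finset.range d →
      (T.image (Nat.cast : ℕ → ZMod d)).image ZMod.val = T := by
    intro T hT
    ext x
    simp only [Finset.mem_image]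
    constructor
    · rintro ⟨z, ⟨y, hy, rfl⟩, rfl⟩
      rwa [ZMod.val_cast_of_lt (Finset.mem_range.mp (hT hy))]
    · intro hx
      exact ⟨(x : ZMod d), ⟨x, hx, rfl⟩, ZMod.val_cast_of_lt (Finset.mem_range.mp (hT hx))⟩
  have himg2 : ∀ S : Finset (ZMod d),
      (S.image ZMod.val).image (Nat.cast : ℕ → ZMod d) = S := by
    intro S
    ext z
    simp only [Finset.mem_image]
    constructor
    · rintro ⟨x, ⟨y, hy, rfl⟩, rfl⟩
      rwa [ZMod.natCast_rightInverse y]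
    · intro hz
      exact ⟨z.val, ⟨z, hz, rfl⟩, ZMod.natCast_rightInverse z⟩
  have stepA : (∑ S ∈ (Finset.univ : Finset (ZMod d)).powerset.filter (fun S => S.Nonempty),
      ∏ s ∈ S, α (cycGap d S s))
      = ∑ T ∈ (Finset.range d).powerset.filter (fun T => T.Nonempty),
          ∏ s ∈ T.image (Nat.cast : ℕ → ZMod d),
            α (cycGap d (T.image (Nat.cast : ℕ → ZMod d)) s) := by
    refine Finset.sum_bij' (fun S (_ : S ∈ _) => S.image ZMod.val)
      (fun T (_ : T ∈ _) => T.image (Nat.cast : ℕ → ZMod d)) ?_ ?_ ?_ ?_ ?_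
    · intro S hS
      obtain ⟨_, hne⟩ := Finset.mem_filter.mp hS
      refine Finset.mem_filter.mpr ⟨Finset.mem_powerset.mpr ?_, hne.image _⟩
      intro x hx
      obtain ⟨z, _, rfl⟩ := Finset.mem_image.mp hx
      exact Finset.mem_range.mpr (ZMod.val_lt z)
    · intro T hT
      obtain ⟨_, hne⟩ := Finset.mem_filter.mp hT
      exact Finset.mem_filter.mpr ⟨Finset.mem_powerset.mpr (Finset.subset_univ _), hne.image _⟩
    · intro S _
      exact himg2 S
    · intro T hT
      exact himg T (Finset.mem_powerset.mp (Finset.mem_filter.mp hT).1)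
    · intro S _
      rw [himg2 S]
  rw [stepA]
  have stepB : (∑ x ∈ (Finset.Icc 1 d).sigma (fun a => (Finset.range a) ×ˢ comps (d - a)),
        α x.1 * ((x.2.2.map α).prod))
      = ∑ T ∈ (Finset.range d).powerset.filter (fun T => T.Nonempty),
          ∏ s ∈ T.image (Nat.cast : ℕ → ZMod d),
            α (cycGap d (T.image (Nat.cast : ℕ → ZMod d)) s) := by
    refine Finset.sum_bij' (fun x (_ : x ∈ _) => (ptsL x.2.1 x.2.2).toFinset)
      (fun T hT => (⟨d - T.max' (Finset.mem_filter.mp hT).2 + T.min' (Finset.mem_filter.mp hT).2,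
        (T.min' (Finset.mem_filter.mp hT).2,
          dfs (T.sort (· ≤ ·)))⟩ : Σ _ : ℕ, ℕ × List ℕ)) ?_ ?_ ?_ ?_ ?_
    · rintro ⟨a, jj, l⟩ hx
      simp only [Finset.mem_sigma, Finset.mem_product, Finset.mem_Icc, Finset.mem_range,
        mem_comps] at hx
      obtain ⟨⟨ha1, had⟩, hjj, hlsum, hlpos⟩ := hx
      refine Finset.mem_filter.mpr ⟨Finset.mem_powerset.mpr ?_,
        ⟨jj, List.mem_toFinset.mpr (ptsL_mem jj l)⟩⟩
      intro x hx'
      have := mem_ptsL_bounds jj x l (List.mem_toFinset.mp hx')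
      exact Finset.mem_range.mpr (by omega)
    · intro T hT
      have hsub := Finset.mem_powerset.mp (Finset.mem_filter.mp hT).1
      have hne := (Finset.mem_filter.mp hT).2
      have hM : T.max' hne < d := Finset.mem_range.mp (hsub (T.max'_mem hne))
      have hm : T.min' hne ≤ T.max' hne := T.min'_le _ (T.max'_mem hne)
      have hds := dfs_sum (T.sort (· ≤ ·)) (sort_ne_nil T hne) (Finset.pairwise_sort _ _)
      rw [sort_head_min' T hne, sort_getLast_max' T hne] at hds
      have hpos := dfs_pos (T.sort (· ≤ ·)) (List.sortedLT_iff_pairwise.mp (Finset.sortedLT_sort T))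
      simp only [Finset.mem_sigma, Finset.mem_product, Finset.mem_Icc, Finset.mem_range,
        mem_comps]
      exact ⟨⟨by omega, by omega⟩, by omega, by omega, hpos⟩
    · rintro ⟨a, jj, l⟩ hx
      simp only [Finset.mem_sigma, Finset.mem_product, Finset.mem_Icc, Finset.mem_range,
        mem_comps] at hx
      obtain ⟨⟨ha1, had⟩, hjj, hlsum, hlpos⟩ := hx
      have hmin : ∀ hh : ((ptsL jj l).toFinset).Nonempty, ((ptsL jj l).toFinset).min' hh = jj :=
        fun hh => _root_.le_antisymm
          (Finset.min'_le _ _ (List.mem_toFinset.mpr (ptsL_mem jj l)))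
          (Finset.le_min' _ _ _ (fun y hy => (mem_ptsL_bounds jj y l (List.mem_toFinset.mp hy)).1))
      have hmax : ∀ hh : ((ptsL jj l).toFinset).Nonempty,
          ((ptsL jj l).toFinset).max' hh = jj + l.sum := fun hh => _root_.le_antisymm
        (Finset.max'_le _ _ _ (fun y hy => (mem_ptsL_bounds jj y l (List.mem_toFinset.mp hy)).2))
        (Finset.le_max' _ _ (List.mem_toFinset.mpr (by
          rw [← ptsL_getLast jj l (ptsL_ne_nil jj l)]
          exact List.getLast_mem _)))
      have hsort' : ((ptsL jj l).toFinset).sort (· ≤ ·) = ptsL jj l :=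
        sort_toFinset_of_sorted _ (ptsL_sorted jj l hlpos)
      simp only [hmin, hmax, hsort', dfs_ptsL]
      have hfin : d - (jj + l.sum) + jj = a := by omega
      rw [hfin]
    · intro T hT
      have hne := (Finset.mem_filter.mp hT).2
      have hh : ptsL ((T.sort (· ≤ ·)).head (sort_ne_nil T hne)) (dfs (T.sort (· ≤ ·)))
          = T.sort (· ≤ ·) :=
        ptsL_reconstruct _ _ (Finset.pairwise_sort _ _)
      rw [sort_head_min' T hne] at hh
      show (ptsL (T.min' hne) (dfs (T.sort (· ≤ ·)))).toFinset = T
      rw [hh, _root_.toFinset_sort]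
    · rintro ⟨a, jj, l⟩ hx
      simp only [Finset.mem_sigma, Finset.mem_product, Finset.mem_Icc, Finset.mem_range,
        mem_comps] at hx
      obtain ⟨⟨ha1, had⟩, hjj, hlsum, hlpos⟩ := hx
      exact (prod_cycGap_s7 d hd α a jj l ha1 had hjj hlsum hlpos).symm
  rw [← stepB, Finset.sum_sigma, arith_lemma d hd α hα]
  apply Finset.sum_congr rfl
  intro a _
  rw [Finset.sum_product]
  have hinner : ∀ jj ∈ Finset.range a,
      (∑ l ∈ comps (d - a), α a * ((l.map α).prod)) = α a * catalan (d - a + 1) := by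
    intro jj _
    rw [← Finset.mul_sum, sum_comps α hα (d - a)]
  rw [Finset.sum_congr rfl hinner, Finset.sum_const, Finset.card_range, smul_eq_mul]
end
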